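/- For every monomial f ∈ M_m, the action of LTA(m,2)_f on f is free: the map (B,ε) ↦ (B,ε)·f from LTA(m,2)_f to R_m is injective, i.e. no polynomial in the orbit LTA(m,2)_f·f is fixed by more than one group element (the identity). -/
import Mathlib


open Finset Pointwise

/-- Points of the affine space `F_2^m`. -/
abbrev Point (m : ℕ) := Fin m → ZMod 2

/-- The ring `R_m = F_2[x_0,…,x_{m-1}]/(x_i^2 - x_i)`, identified with the ring of
functions `F_2^m → F_2` via the evaluation isomorphism `ev`. -/
abbrev Fn (m : ℕ) := Point m → ZMod 2

/-- The monomial `∏_{i ∈ S} x_i` (as the function it evaluates to). -/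
def monFn (m : ℕ) (S : Finset (Fin m)) : Fn m := fun u => ∏ i ∈ S, u i

/-- Hamming weight of `ev(P)`: the number of points where `P` takes the value 1. -/
def wt (m : ℕ) (P : Fn m) : ℕ := (Finset.univ.filter fun u => P u = 1).card

/-- The monomial code `C(I)`: the `F_2`-span of the evaluations of the monomials in `I`. -/
def code (m : ℕ) (I : Set (Finset (Fin m))) : Submodule (ZMod 2) (Fn m) :=
  Submodule.span (ZMod 2) (monFn m '' I)

/-- `f ≼_sh g` for monomials of equal degree: the sorted index lists compare entrywise. -/
def shLE (m : ℕ) (S T : Finset (Fin m)) : Prop :=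
  S.card = T.card ∧
    ∀ (ℓ : ℕ) (hS : ℓ < (S.sort (· ≤ ·)).length) (hT : ℓ < (T.sort (· ≤ ·)).length),
      (S.sort (· ≤ ·)).get ⟨ℓ, hS⟩ ≤ (T.sort (· ≤ ·)).get ⟨ℓ, hT⟩

/-- `f ≼ g` iff there is a monomial `g*` with `f ≼_sh g* ≼_w g`. -/
def pre (m : ℕ) (S T : Finset (Fin m)) : Prop :=
  ∃ U : Finset (Fin m), shLE m S U ∧ U ⊆ T

/-- A decreasing set of monomials. -/
def Decreasing (m : ℕ) (I : Set (Finset (Fin m))) : Prop :=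
  ∀ f ∈ I, ∀ g : Finset (Fin m), pre m g f → g ∈ I

/-- The affine map `u ↦ B u + ε` on `F_2^m`. -/
def affMap (m : ℕ) (B : Fin m → Fin m → ZMod 2) (ε : Point m) (u : Point m) : Point m :=
  fun i => (∑ j, B i j * u j) + ε i

/-- `B` is lower triangular with unit diagonal. -/
def IsLT (m : ℕ) (B : Fin m → Fin m → ZMod 2) : Prop :=
  (∀ i, B i i = 1) ∧ ∀ i j : Fin m, i < j → B i j = 0

/-- The action of `(B,ε) ∈ LTA(m,2)` on `R_m`: substitute `x_i ↦ x_i + Σ_{j<i} b_{i,j} x_j + ε_i`.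
In the function representation this is precomposition with the affine map. -/
def act (m : ℕ) (B : Fin m → Fin m → ZMod 2) (ε : Point m) (P : Fn m) : Fn m :=
  fun u => P (affMap m B ε u)

/-- The orbit `LTA(m,2)·P`. -/
def orbit (m : ℕ) (P : Fn m) : Set (Fn m) :=
  {Q | ∃ B ε, IsLT m B ∧ Q = act m B ε P}

/-- Membership in the subgroup `LTA(m,2)_g` for the monomial `g` with index set `S`:
`ε_i = 0` if `i ∉ ind(g)`, and `b_{i,j} = 0` (off the diagonal) if `i ∉ ind(g)` or `j ∈ ind(g)`. -/
def IsLTsub (m : ℕ) (S : Finset (Fin m)) (B : Fin m → Fin m → ZMod 2) (ε : Point m) : Prop :=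
  IsLT m B ∧ (∀ i, i ∉ S → ε i = 0) ∧
    ∀ i j : Fin m, j ≠ i → (i ∉ S ∨ j ∈ S) → B i j = 0

/-- The orbit `LTA(m,2)_g · P` where `S = ind(g)`. -/
def orbitSub (m : ℕ) (S : Finset (Fin m)) (P : Fn m) : Set (Fn m) :=
  {Q | ∃ B ε, IsLTsub m S B ε ∧ Q = act m B ε P}

/-- `λ_f(i) = |{j : j < i, j ∉ ind(f)}|` where `S = ind(f)`. -/
def lam (m : ℕ) (S : Finset (Fin m)) (i : Fin m) : ℕ :=
  (Finset.univ.filter fun j => j < i ∧ j ∉ S).card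

/-- `|λ_f(g)| = Σ_{i ∈ ind(g)} λ_f(i)`. -/
def lamSum (m : ℕ) (S T : Finset (Fin m)) : ℕ := ∑ i ∈ T, lam m S i

/-- The affine form `c + Σ_i a_i x_i`. -/
def affForm (m : ℕ) (c : ZMod 2) (a : Point m) : Fn m := fun u => c + ∑ i, a i * u i

/-- `deg(P) ≤ r`: `P` lies in the span of the (multilinear) monomials of degree at most `r`. -/
def degLE (m : ℕ) (P : Fn m) (r : ℕ) : Prop :=
  P ∈ Submodule.span (ZMod 2)
    {Q : Fn m | ∃ S : Finset (Fin m), S.card ≤ r ∧ Q = monFn m S}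


lemma zmod2_cases (a : ZMod 2) : a = 0 ∨ a = 1 := by
  revert a; decide

lemma prod_eq_one_forall {α : Type*} (s : Finset α) (f : α → ZMod 2)
    (h : ∏ i ∈ s, f i = 1) : ∀ i ∈ s, f i = 1 := by
  intro i hi
  by_contra hne
  have h0 : f i = 0 := by rcases zmod2_cases (f i) with h' | h' <;> tauto
  rw [Finset.prod_eq_zero hi h0] at h
  exact absurd h (by decide)

lemma act_eval (m : ℕ) (S : Finset (Fin m)) (B : Fin m → Fin m → ZMod 2)
    (ε : Point m) (hB : IsLTsub m S B ε) (u : Point m) :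
    act m B ε (monFn m S) u = ∏ i ∈ S, (u i + (∑ j ∈ Sᶜ, B i j * u j) + ε i) := by
  unfold act affMap monFn
  refine Finset.prod_congr rfl fun i hi => ?_
  show (∑ j, B i j * u j) + ε i = _
  congr 1
  have hsplit : (∑ j, B i j * u j) = (∑ j ∈ S, B i j * u j) + ∑ j ∈ Sᶜ, B i j * u j := by
    rw [← Finset.sum_add_sum_compl S]
  rw [hsplit]
  congr 1
  have hcg : ∀ j ∈ S, B i j * u j = if j = i then u j else 0 := by
    intro j hj
    by_cases hji : j = i
    · simp [hji, hB.1.1 i]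
    · simp [hB.2.2 i j hji (Or.inr hj), hji]
  rw [Finset.sum_congr rfl hcg, Finset.sum_ite_eq' S i (fun j => u j), if_pos hi]

/-- The action of `LTA(m,2)_f` on the monomial `f` is free. -/
theorem stmt2 (m : ℕ) (hm : 1 ≤ m) (S : Finset (Fin m))
    (B B' : Fin m → Fin m → ZMod 2) (ε ε' : Point m)
    (hB : IsLTsub m S B ε) (hB' : IsLTsub m S B' ε')
    (h : act m B ε (monFn m S) = act m B' ε' (monFn m S)) :
    B = B' ∧ ε = ε' := by
  -- Step 1: ε = ε'
  have hε : ε = ε' := by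
    funext i
    by_cases hi : i ∈ S
    · set u : Point m := fun j => if j ∈ S then 1 + ε j else 0 with hu
      have hu0 : ∀ j ∈ Sᶜ, u j = 0 := by
        intro j hj
        simp only [Finset.mem_compl] at hj
        simp [hu, hj]
      have hz : ∀ C : Fin m → Fin m → ZMod 2, ∀ k, (∑ j ∈ Sᶜ, C k j * u j) = 0 := by
        intro C k
        refine Finset.sum_eq_zero fun j hj => ?_
        rw [hu0 j hj, mul_zero]
      have hL : act m B ε (monFn m S) u = 1 := by
        rw [act_eval m S B ε hB u]
        refine Finset.prod_eq_one fun k hk => ?_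
        rw [hz B k]
        simp only [hu, if_pos hk]
        rcases zmod2_cases (ε k) with h' | h' <;> rw [h'] <;> decide
      have hR : act m B' ε' (monFn m S) u = ∏ k ∈ S, (1 + ε k + ε' k) := by
        rw [act_eval m S B' ε' hB' u]
        refine Finset.prod_congr rfl fun k hk => ?_
        rw [hz B' k]
        simp only [hu, if_pos hk]
        rcases zmod2_cases (ε k) with h' | h' <;>
          rcases zmod2_cases (ε' k) with h'' | h'' <;> rw [h', h''] <;> decide
      have h1 : (1 : ZMod 2) = ∏ k ∈ S, (1 + ε k + ε' k) := by
        rw [← hR, ← congrFun h u, hL]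
      have hf := prod_eq_one_forall S _ h1.symm i hi
      rcases zmod2_cases (ε i) with h' | h' <;> rcases zmod2_cases (ε' i) with h'' | h'' <;>
        rw [h', h''] at hf ⊢ <;> revert hf <;> decide
    · rw [hB.2.1 i hi, hB'.2.1 i hi]
  subst hε
  refine ⟨?_, rfl⟩
  funext i j
  by_cases hji : j = i
  · subst hji; rw [hB.1.1, hB'.1.1]
  by_cases hjS : j ∈ S
  · rw [hB.2.2 i j hji (Or.inr hjS), hB'.2.2 i j hji (Or.inr hjS)]
  by_cases hiS : i ∈ S
  · -- key case: i ∈ S, j ∉ S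
    set u : Point m := fun k => if k ∈ S then 1 + ε k + B k j else if k = j then 1 else 0 with hu
    have hsum : ∀ C : Fin m → Fin m → ZMod 2,
        (∀ a b : Fin m, b ≠ a → (a ∉ S ∨ b ∈ S) → C a b = 0) →
        ∀ k ∈ S, (∑ l ∈ Sᶜ, C k l * u l) = C k j := by
      intro C hC k hk
      have hcg : ∀ l ∈ Sᶜ, C k l * u l = if l = j then C k j else 0 := by
        intro l hl
        simp only [Finset.mem_compl] at hl
        by_cases hlj : l = j
        · subst hlj; simp [hu, hl]
        · simp [hu, hl, hlj]
      rw [Finset.sum_congr rfl hcg, Finset.sum_ite_eq' Sᶜ j (fun _ => C k j),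
        if_pos (Finset.mem_compl.mpr hjS)]
    have hL : act m B ε (monFn m S) u = 1 := by
      rw [act_eval m S B ε hB u]
      refine Finset.prod_eq_one fun k hk => ?_
      rw [hsum B hB.2.2 k hk]
      simp only [hu, if_pos hk]
      rcases zmod2_cases (ε k) with h' | h' <;>
        rcases zmod2_cases (B k j) with h'' | h'' <;> rw [h', h''] <;> decide
    have hR : act m B' ε (monFn m S) u = ∏ k ∈ S, (1 + B k j + B' k j) := by
      rw [act_eval m S B' ε hB' u]
      refine Finset.prod_congr rfl fun k hk => ?_
      rw [hsum B' hB'.2.2 k hk]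
      simp only [hu, if_pos hk]
      rcases zmod2_cases (ε k) with h' | h' <;>
        rcases zmod2_cases (B k j) with h'' | h'' <;>
          rcases zmod2_cases (B' k j) with h3 | h3 <;> rw [h', h'', h3] <;> decide
    have h1 : (1 : ZMod 2) = ∏ k ∈ S, (1 + B k j + B' k j) := by
      rw [← hR, ← congrFun h u, hL]
    have hf := prod_eq_one_forall S _ h1.symm i hiS
    rcases zmod2_cases (B i j) with h' | h' <;> rcases zmod2_cases (B' i j) with h'' | h'' <;>
      rw [h', h''] at hf ⊢ <;> revert hf <;> decide
  · rw [hB.2.2 i j hji (Or.inl hiS), hB'.2.2 i j hji (Or.inl hiS)]
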